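/- For every integer q ≥ 7, one has 1 < 2cos²(π/q) − 1/2 ≤ 2cos(π/q)(2cos²(π/q) − 1), with equality on the right if and only if q = 7. -/

import Mathlib

open Real

private lemma stmt_11_aux (a c : ℝ) (ha : (0.85:ℝ) < a) (hc : (0.85:ℝ) < c)
    (ha1 : a ≤ 1) (hc1 : c ≤ 1) (hac : a ≤ c)
    (hcubic : 8*a^3 - 4*a^2 - 4*a + 1 = 0) :
    1 < 2*c^2 - 1/2 ∧ 2*c^2 - 1/2 ≤ 2*c*(2*c^2-1) ∧
      (2*c^2 - 1/2 = 2*c*(2*c^2-1) ↔ c = a) := by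
  have hfac : 2*c*(2*c^2-1) - (2*c^2 - 1/2) =
      (c - a) * (4*c^2 + 4*a*c + 4*a^2 - 2*c - 2*a - 2) := by
    linear_combination ((1:ℝ)/2) * hcubic
  have hg : 0 < 4*c^2 + 4*a*c + 4*a^2 - 2*c - 2*a - 2 := by nlinarith
  refine ⟨by nlinarith, ?_, ?_, ?_⟩
  · nlinarith [mul_nonneg (sub_nonneg.mpr hac) hg.le]
  · intro heq
    have h0 : (c - a) * (4*c^2 + 4*a*c + 4*a^2 - 2*c - 2*a - 2) = 0 := by linarith
    rcases mul_eq_zero.mp h0 with h | h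
    · linarith
    · linarith
  · intro h; rw [h] at hfac ⊢; linarith

theorem stmt_11 (q : ℕ) (hq : 7 ≤ q) :
    1 < 2 * Real.cos (π / q) ^ 2 - 1/2 ∧
    2 * Real.cos (π / q) ^ 2 - 1/2
      ≤ 2 * Real.cos (π / q) * (2 * Real.cos (π / q) ^ 2 - 1) ∧
    (2 * Real.cos (π / q) ^ 2 - 1/2
      = 2 * Real.cos (π / q) * (2 * Real.cos (π / q) ^ 2 - 1) ↔ q = 7) := by
  have hπ := Real.pi_pos
  have hq0 : (7:ℝ) ≤ (q:ℝ) := by exact_mod_cast hq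
  have hqpos : (0:ℝ) < q := by linarith
  have hθpos : 0 < π / q := div_pos hπ hqpos
  have hθ7 : π / q ≤ π / 7 := by
    rw [div_le_div_iff₀ hqpos (by norm_num)]
    nlinarith
  have hθ6 : π / (q:ℝ) < π / 6 := by
    have : π / 7 < π / 6 := by linarith
    linarith
  have hθπ : π / (q:ℝ) ≤ π := by linarith
  have h7π : π / 7 ≤ π := by linarith
  have hsqrt3 : (1.7:ℝ) < Real.sqrt 3 := by
    rw [show (1.7:ℝ) = Real.sqrt (1.7^2) by rw [Real.sqrt_sq]; norm_num]
    apply Real.sqrt_lt_sqrt <;> norm_num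
  have hagt : Real.sqrt 3 / 2 < Real.cos (π / 7) := by
    rw [← Real.cos_pi_div_six]
    exact Real.strictAntiOn_cos ⟨by positivity, h7π⟩ ⟨by positivity, by linarith⟩
      (by linarith)
  have hcgt : Real.sqrt 3 / 2 < Real.cos (π / q) := by
    rw [← Real.cos_pi_div_six]
    exact Real.strictAntiOn_cos ⟨hθpos.le, hθπ⟩ ⟨by positivity, by linarith⟩ hθ6
  have hac : Real.cos (π / 7) ≤ Real.cos (π / q) :=
    Real.cos_le_cos_of_nonneg_of_le_pi hθpos.le h7π hθ7
  -- cubic identity for a = cos(π/7)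
  have h4 : Real.cos (2*(2*(π/7))) = -Real.cos (3*(π/7)) := by
    rw [show (2:ℝ)*(2*(π/7)) = π - 3*(π/7) by ring, Real.cos_pi_sub]
  rw [Real.cos_two_mul, Real.cos_two_mul, Real.cos_three_mul] at h4
  have hcubic : 8*Real.cos (π/7)^3 - 4*Real.cos (π/7)^2 - 4*Real.cos (π/7) + 1 = 0 := by
    have hquartic : 8*Real.cos (π/7)^4 + 4*Real.cos (π/7)^3 - 8*Real.cos (π/7)^2
        - 3*Real.cos (π/7) + 1 = 0 := by linear_combination h4
    have hfactor : (Real.cos (π/7) + 1) *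
        (8*Real.cos (π/7)^3 - 4*Real.cos (π/7)^2 - 4*Real.cos (π/7) + 1) = 0 := by
      linear_combination hquartic
    rcases mul_eq_zero.mp hfactor with h | h
    · exfalso; nlinarith
    · exact h
  obtain ⟨h1, h2, h3⟩ := stmt_11_aux (Real.cos (π/7)) (Real.cos (π/q))
    (by linarith) (by linarith) (Real.cos_le_one _) (Real.cos_le_one _) hac hcubic
  refine ⟨by linarith, by linarith, ?_, ?_⟩
  · intro heq
    have hca : Real.cos (π / q) = Real.cos (π / 7) := h3.mp (by linarith)
    have hθeq : π / (q:ℝ) = π / 7 :=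
      Real.injOn_cos ⟨hθpos.le, hθπ⟩ ⟨by positivity, h7π⟩ hca
    have : (q:ℝ) = 7 := by
      field_simp at hθeq
      linarith
    exact_mod_cast this
  · intro h
    subst h
    have hca : Real.cos (π / (7:ℕ)) = Real.cos (π / 7) := by norm_num
    have := h3.mpr hca
    linarith
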